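/- arXiv:1511.04210 — 3 statements merged into one kernel-verified Lean document; each statement's English description precedes it below -/
import Mathlib

section
/- Let v, ṽ be nonzero reals with sign(v) = sign(ṽ), w, w̃ ∈ ℝ^d, x ∈ ℝ^d with sign(⟨w̃, x⟩) = sign(⟨w, x⟩). Define v^λ = λṽ + (1−λ)v and w^λ = (λ ṽ w̃ + (1−λ) v w)/v^λ for λ ∈ (0,1). Then sign(⟨w^λ, x⟩) = sign(⟨w, x⟩) and sign(v^λ) = sign(v) for all λ ∈ (0,1). -/
open scoped RealInnerProductSpace

lemma sign_pos_aux (v vt : ℝ) (h : 0 < v) (hsign : Real.sign v = Real.sign vt) : 0 < vt := by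
  by_contra hc
  push_neg at hc
  rcases hc.lt_or_eq with h' | h'
  · rw [Real.sign_of_pos h, Real.sign_of_neg h'] at hsign; norm_num at hsign
  · rw [Real.sign_of_pos h, h', Real.sign_zero] at hsign; norm_num at hsign

lemma sign_neg_aux (v vt : ℝ) (h : v < 0) (hsign : Real.sign v = Real.sign vt) : vt < 0 := by
  by_contra hc
  push_neg at hc
  rcases hc.lt_or_eq with h' | h'
  · rw [Real.sign_of_neg h, Real.sign_of_pos h'] at hsign; norm_num at hsign
  · rw [Real.sign_of_neg h, ← h', Real.sign_zero] at hsign; norm_num at hsign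

lemma sign_zero_aux (a b : ℝ) (hA : a = 0) (hx : Real.sign b = Real.sign a) : b = 0 := by
  by_contra hc
  rcases lt_or_gt_of_ne hc with h' | h'
  · rw [Real.sign_of_neg h', hA, Real.sign_zero] at hx; norm_num at hx
  · rw [Real.sign_of_pos h', hA, Real.sign_zero] at hx; norm_num at hx

lemma sign_aux (v vt : ℝ) (hv : v ≠ 0) (hsign : Real.sign v = Real.sign vt)
    (l : ℝ) (hl0 : 0 < l) (hl1 : l < 1) :
    Real.sign (l * vt + (1 - l) * v) = Real.sign v := by
  rcases hv.lt_or_gt with h | h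
  · have hvt := sign_neg_aux v vt h hsign
    have : l * vt + (1 - l) * v < 0 := by nlinarith
    rw [Real.sign_of_neg this, Real.sign_of_neg h]
  · have hvt := sign_pos_aux v vt h hsign
    have : 0 < l * vt + (1 - l) * v := by nlinarith
    rw [Real.sign_of_pos this, Real.sign_of_pos h]

/-- Along the interpolation path (w^λ, v^λ), the signs of ⟨w^λ, x⟩ and of
v^λ are preserved for all λ ∈ (0,1). -/
theorem stmt_7 (d : ℕ) (v vt : ℝ) (hv : v ≠ 0) (hvt : vt ≠ 0)
    (hsign : Real.sign v = Real.sign vt)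
    (w wt x : EuclideanSpace ℝ (Fin d))
    (hx : Real.sign ⟪wt, x⟫ = Real.sign ⟪w, x⟫) :
    ∀ l ∈ Set.Ioo (0 : ℝ) 1,
      Real.sign ⟪(l * vt + (1 - l) * v)⁻¹ •
          ((l * vt) • wt + ((1 - l) * v) • w), x⟫ = Real.sign ⟪w, x⟫ ∧
      Real.sign (l * vt + (1 - l) * v) = Real.sign v := by
  intro l hl
  obtain ⟨hl0, hl1⟩ := hl
  set a := ⟪w, x⟫ with ha
  set b := ⟪wt, x⟫ with hb
  set s := l * vt + (1 - l) * v with hs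
  have hinner : ⟪s⁻¹ • ((l * vt) • wt + ((1 - l) * v) • w), x⟫
      = s⁻¹ * (l * vt * b + (1 - l) * v * a) := by
    rw [real_inner_smul_left, inner_add_left, real_inner_smul_left, real_inner_smul_left]
  refine ⟨?_, sign_aux v vt hv hsign l hl0 hl1⟩
  rw [hinner]
  rcases hv.lt_or_gt with h | h
  · have hvt' := sign_neg_aux v vt h hsign
    have hsneg : s < 0 := by rw [hs]; nlinarith
    have h1 : s⁻¹ < 0 := inv_neg''.mpr hsneg
    rcases lt_trichotomy a 0 with hA | hA | hA
    · have hB : b < 0 := sign_neg_aux a b hA (hx.symm)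
      have hsum : 0 < l * vt * b + (1 - l) * v * a := by
        nlinarith [mul_pos hl0 (mul_pos_of_neg_of_neg hvt' hB),
          mul_pos (show (0:ℝ) < 1 - l by linarith) (mul_pos_of_neg_of_neg h hA)]
      have : s⁻¹ * (l * vt * b + (1 - l) * v * a) < 0 := mul_neg_of_neg_of_pos h1 hsum
      rw [Real.sign_of_neg this, Real.sign_of_neg hA]
    · have hB : b = 0 := sign_zero_aux a b hA hx
      rw [hA, hB]; simp
    · have hB : 0 < b := sign_pos_aux a b hA (hx.symm)
      have hsum : l * vt * b + (1 - l) * v * a < 0 := by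
        nlinarith [mul_neg_of_pos_of_neg hl0 (mul_neg_of_neg_of_pos hvt' hB),
          mul_neg_of_pos_of_neg (show (0:ℝ) < 1 - l by linarith) (mul_neg_of_neg_of_pos h hA)]
      have : 0 < s⁻¹ * (l * vt * b + (1 - l) * v * a) := mul_pos_of_neg_of_neg h1 hsum
      rw [Real.sign_of_pos this, Real.sign_of_pos hA]
  · have hvt' := sign_pos_aux v vt h hsign
    have hspos : 0 < s := by rw [hs]; nlinarith
    have h1 : 0 < s⁻¹ := inv_pos.mpr hspos
    rcases lt_trichotomy a 0 with hA | hA | hA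
    · have hB : b < 0 := sign_neg_aux a b hA (hx.symm)
      have hsum : l * vt * b + (1 - l) * v * a < 0 := by
        nlinarith [mul_neg_of_pos_of_neg hl0 (mul_neg_of_pos_of_neg hvt' hB),
          mul_neg_of_pos_of_neg (show (0:ℝ) < 1 - l by linarith) (mul_neg_of_pos_of_neg h hA)]
      have : s⁻¹ * (l * vt * b + (1 - l) * v * a) < 0 := mul_neg_of_pos_of_neg h1 hsum
      rw [Real.sign_of_neg this, Real.sign_of_neg hA]
    · have hB : b = 0 := sign_zero_aux a b hA hx
      rw [hA, hB]; simp
    · have hB : 0 < b := sign_pos_aux a b hA (hx.symm)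
      have hsum : 0 < l * vt * b + (1 - l) * v * a := by
        nlinarith [mul_pos hl0 (mul_pos hvt' hB),
          mul_pos (show (0:ℝ) < 1 - l by linarith) (mul_pos h hA)]
      have : 0 < s⁻¹ * (l * vt * b + (1 - l) * v * a) := mul_pos h1 hsum
      rw [Real.sign_of_pos this, Real.sign_of_pos hA]
end

section
/- Let X be a real-valued random variable whose distribution is symmetric (X and −X have the same law), and let L : ℝ → ℝ be such that almost surely, whenever x is a realization of X, max{L(x), L(−x)} > L(0). Then P[L(X) > L(0)] ≥ 1/2. -/
open MeasureTheory

/-- If X is a symmetric real random variable and L satisfies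
max{L(x), L(−x)} > L(0) almost surely along realizations of X, then
P[L(X) > L(0)] ≥ 1/2. -/
theorem stmt_10 {Ω : Type*} [MeasurableSpace Ω] (μ : Measure Ω)
    [IsProbabilityMeasure μ] (X : Ω → ℝ) (hX : Measurable X)
    (hsym : Measure.map X μ = Measure.map (fun ω => -X ω) μ)
    (L : ℝ → ℝ) (hL : Measurable L)
    (h : ∀ᵐ ω ∂μ, max (L (X ω)) (L (-X ω)) > L 0) :
    μ {ω | L (X ω) > L 0} ≥ 1 / 2 := by
  set S : Set ℝ := {x | L x > L 0} with hS
  have hSm : MeasurableSet S := measurableSet_lt measurable_const hL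
  have hA : {ω | L (X ω) > L 0} = X ⁻¹' S := rfl
  have hB : {ω | L (-X ω) > L 0} = (fun ω => -X ω) ⁻¹' S := rfl
  have hXneg : Measurable fun ω => -X ω := hX.neg
  have heq : μ (X ⁻¹' S) = μ ((fun ω => -X ω) ⁻¹' S) := by
    rw [← Measure.map_apply hX hSm, ← Measure.map_apply hXneg hSm, hsym]
  have hunion : μ (X ⁻¹' S ∪ (fun ω => -X ω) ⁻¹' S) = 1 := by
    rw [← measure_univ (μ := μ)]
    apply measure_congr
    filter_upwards [h] with ω hω
    have hmem : ω ∈ X ⁻¹' S ∪ (fun ω => -X ω) ⁻¹' S := lt_max_iff.mp hω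
    exact propext (iff_of_true hmem trivial)
  have hle : (1 : ENNReal) ≤ μ (X ⁻¹' S) + μ (X ⁻¹' S) := by
    calc (1 : ENNReal) = μ (X ⁻¹' S ∪ (fun ω => -X ω) ⁻¹' S) := hunion.symm
    _ ≤ μ (X ⁻¹' S) + μ ((fun ω => -X ω) ⁻¹' S) := measure_union_le _ _
    _ = μ (X ⁻¹' S) + μ (X ⁻¹' S) := by rw [heq]
  rw [hA, ge_iff_le, ENNReal.div_le_iff (by norm_num) (by norm_num)]
  rw [← two_mul] at hle
  rwa [mul_comm]
end

section
/- Let a be a fixed unit vector in ℝ^d (d ≥ 2) and let b be drawn uniformly from the unit sphere S^{d−1}. Then for any δ ∈ (0, 2], P[‖a − b‖ ≤ δ] ≥ (1/(π(d−1))) · (δ √(1 − δ²/4))^{d−1}. -/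
open MeasureTheory Real Set Pointwise
open scoped ENNReal

namespace S17

noncomputable section

variable {n : ℕ}

def Q (z : Fin n → ℝ) : ℝ := ∑ j, z j ^ 2

lemma Q_nonneg (z : Fin n → ℝ) : 0 ≤ Q z := Finset.sum_nonneg fun _ _ => sq_nonneg _

lemma contQ : Continuous (Q (n := n)) := by
  unfold Q; exact continuous_finset_sum _ fun j _ => (continuous_apply j).pow 2

def Bn (n : ℕ) : ℝ≥0∞ := volume {z : Fin n → ℝ | Q z ≤ 1}

lemma sqrt_pow_rpow {x : ℝ} (hx : 0 ≤ x) (n : ℕ) : Real.sqrt x ^ n = x ^ ((n : ℝ)/2) := by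
  rw [Real.sqrt_eq_rpow, ← Real.rpow_natCast (x ^ (1/2 : ℝ)) n, ← Real.rpow_mul hx]
  ring_nf

lemma vol_Qball (hn : 1 ≤ n) {r : ℝ} (hr : 0 ≤ r) :
    volume {z : Fin n → ℝ | Q z ≤ r ^ 2} = ENNReal.ofReal (r ^ n) * Bn n := by
  rcases eq_or_lt_of_le hr with rfl | hr
  · have h0 : {z : Fin n → ℝ | Q z ≤ (0:ℝ) ^ 2} ⊆ {z | z ⟨0, hn⟩ = 0} := by
      intro z hz
      simp only [mem_setOf_eq] at hz ⊢
      have h1 : Q z = 0 := le_antisymm (by simpa using hz) (Q_nonneg z)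
      have := (Finset.sum_eq_zero_iff_of_nonneg (fun j _ => sq_nonneg (z j))).1 h1
      have := this ⟨0, hn⟩ (Finset.mem_univ _)
      exact sq_eq_zero_iff.mp this
    have : volume {z : Fin n → ℝ | Q z ≤ (0:ℝ)^2} = 0 :=
      measure_mono_null h0 (by rw [volume_pi]; simpa using Measure.pi_hyperplane (fun _ : Fin n => volume) ⟨0, hn⟩ 0)
    norm_num at this ⊢
    simp [this, zero_pow (by omega : n ≠ 0)]
  · have hset : {z : Fin n → ℝ | Q z ≤ r ^ 2} = r • {z : Fin n → ℝ | Q z ≤ 1} := by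
      ext z
      rw [Set.mem_smul_set_iff_inv_smul_mem₀ hr.ne']
      simp only [mem_setOf_eq]
      have : Q (r⁻¹ • z) = r⁻¹ ^ 2 * Q z := by
        unfold Q
        rw [Finset.mul_sum]
        exact Finset.sum_congr rfl fun j _ => by simp [Pi.smul_apply, mul_pow]
      rw [this]
      rw [inv_pow, inv_mul_le_iff₀ (by positivity), mul_one]
    rw [hset, Measure.addHaar_smul, Module.finrank_fin_fun,
      abs_of_nonneg (by positivity : (0:ℝ) ≤ r ^ n)]
    rfl

lemma vol_slice {A : Set (ℝ × (Fin n → ℝ))} (hA : MeasurableSet A) :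
    volume A = ∫⁻ t : ℝ, volume {z | (t, z) ∈ A} := by
  rw [MeasureTheory.Measure.volume_eq_prod, Measure.prod_apply hA]
  rfl

lemma vol_K2 (hn : 1 ≤ n) {c : ℝ} (hc0 : 0 ≤ c) (hc1 : c < 1) :
    ENNReal.ofReal ((1 - c^2) ^ ((n:ℝ)/2) * ((1 - c) * (2 / (n + 2)))) * Bn n ≤
      volume {p : ℝ × (Fin n → ℝ) | c < p.1 ∧ p.1 ^ 2 + Q p.2 ≤ 1} := by
  have hmeas : MeasurableSet {p : ℝ × (Fin n → ℝ) | c < p.1 ∧ p.1 ^ 2 + Q p.2 ≤ 1} :=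
    (measurableSet_lt measurable_const measurable_fst).inter
      (measurableSet_le ((measurable_fst.pow_const 2).add
        (contQ.measurable.comp measurable_snd)) measurable_const)
  rw [vol_slice hmeas]
  set g : ℝ → ℝ := fun t => ((1+c)*(1-t)) ^ ((n:ℝ)/2) with hg
  have hgc : Continuous g := (continuous_const.mul (continuous_const.sub continuous_id)).rpow_const
    (fun _ => Or.inr (by positivity))
  have step1 : ∫⁻ t in Ioc c 1, ENNReal.ofReal (g t) * Bn n ≤ ∫⁻ t : ℝ, volume {z | (t, z) ∈
      {p : ℝ × (Fin n → ℝ) | c < p.1 ∧ p.1 ^ 2 + Q p.2 ≤ 1}} := by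
    refine le_trans (setLIntegral_mono' measurableSet_Ioc ?_) (setLIntegral_le_lintegral _ _)
    intro t ht
    have h1 : (0:ℝ) ≤ 1 - t := by linarith [ht.2]
    have h2 : (0:ℝ) ≤ (1+c)*(1-t) := by positivity
    have hsub : {z : Fin n → ℝ | Q z ≤ Real.sqrt ((1+c)*(1-t)) ^ 2} ⊆
        {z | (t, z) ∈ {p : ℝ × (Fin n → ℝ) | c < p.1 ∧ p.1 ^ 2 + Q p.2 ≤ 1}} := by
      intro z hz
      simp only [mem_setOf_eq] at hz ⊢
      rw [Real.sq_sqrt h2] at hz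
      refine ⟨ht.1, ?_⟩
      nlinarith [ht.1.le, ht.2, hc0]
    calc ENNReal.ofReal (g t) * Bn n
        = volume {z : Fin n → ℝ | Q z ≤ Real.sqrt ((1+c)*(1-t)) ^ 2} := by
          rw [vol_Qball hn (Real.sqrt_nonneg _), sqrt_pow_rpow h2]
      _ ≤ _ := measure_mono hsub
  refine le_trans ?_ step1
  rw [lintegral_mul_const _ (show Measurable fun t => ENNReal.ofReal (g t) from
    ENNReal.measurable_ofReal.comp hgc.measurable)]
  have hint : IntegrableOn g (Ioc c 1) volume :=
    (hgc.integrableOn_Icc).mono_set Ioc_subset_Icc_self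
  rw [← ofReal_integral_eq_lintegral_ofReal hint]
  swap
  · filter_upwards [self_mem_ae_restrict measurableSet_Ioc] with t ht
    have h1 : (0:ℝ) ≤ 1 - t := by linarith [ht.2]
    positivity
  apply mul_le_mul_left
  apply ENNReal.ofReal_le_ofReal
  rw [← intervalIntegral.integral_of_le hc1.le]
  have hJ : ∫ t in c..1, g t = (1+c) ^ ((n:ℝ)/2) * ∫ t in c..1, (1-t) ^ ((n:ℝ)/2) := by
    rw [← intervalIntegral.integral_const_mul]
    apply intervalIntegral.integral_congr
    intro t ht
    rw [uIcc_of_le hc1.le] at ht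
    exact Real.mul_rpow (by positivity) (by linarith [ht.2])
  have hJ2 : ∫ t in c..1, (1-t) ^ ((n:ℝ)/2) =
      ((1-c) ^ ((n:ℝ)/2 + 1)) / ((n:ℝ)/2 + 1) := by
    rw [intervalIntegral.integral_comp_sub_left (fun u => u ^ ((n:ℝ)/2)) 1]
    norm_num
    rw [integral_rpow (Or.inl (lt_of_lt_of_le (by norm_num) (by positivity : (0:ℝ) ≤ (n:ℝ)/2)))]
    rw [Real.zero_rpow (by positivity : (0:ℝ) < (n:ℝ)/2+1).ne']
    ring
  rw [hJ, hJ2]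
  have h1c : (0:ℝ) < 1 - c := by linarith
  rw [Real.rpow_add h1c, Real.rpow_one,
    show (1:ℝ) - c^2 = (1+c)*(1-c) by ring, Real.mul_rpow (by positivity) h1c.le]
  have hden : (0:ℝ) < (n:ℝ)/2 + 1 := by positivity
  apply le_of_eq
  field_simp

lemma vol_K1 (hn : 1 ≤ n) {c : ℝ} (hc0 : 0 < c) (hc1 : c < 1) :
    ENNReal.ofReal ((1 - c^2) ^ ((n:ℝ)/2) * (c / (n + 1))) * Bn n ≤
      volume {p : ℝ × (Fin n → ℝ) | 0 ≤ p.1 ∧ p.1 ≤ c ∧ c^2 * Q p.2 ≤ p.1^2 * (1 - c^2)} := by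
  have hmeas : MeasurableSet {p : ℝ × (Fin n → ℝ) | 0 ≤ p.1 ∧ p.1 ≤ c ∧
      c^2 * Q p.2 ≤ p.1^2 * (1 - c^2)} := by
    refine (measurableSet_le measurable_const measurable_fst).inter
      ((measurableSet_le measurable_fst measurable_const).inter
      (measurableSet_le ((contQ.measurable.comp measurable_snd).const_mul _) ?_))
    exact (measurable_fst.pow_const 2).mul_const _
  rw [vol_slice hmeas]
  set g : ℝ → ℝ := fun t => (t * (Real.sqrt (1 - c^2) / c)) ^ n with hg
  have hgc : Continuous g := (continuous_id.mul continuous_const).pow n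
  have hs2 : Real.sqrt (1-c^2) ^ 2 = 1 - c^2 := Real.sq_sqrt (by nlinarith)
  have step1 : ∫⁻ t in Ioc 0 c, ENNReal.ofReal (g t) * Bn n ≤ ∫⁻ t : ℝ, volume {z | (t, z) ∈
      {p : ℝ × (Fin n → ℝ) | 0 ≤ p.1 ∧ p.1 ≤ c ∧ c^2 * Q p.2 ≤ p.1^2 * (1 - c^2)}} := by
    refine le_trans (setLIntegral_mono' measurableSet_Ioc ?_) (setLIntegral_le_lintegral _ _)
    intro t ht
    have hr0 : 0 ≤ t * (Real.sqrt (1 - c^2) / c) :=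
      mul_nonneg ht.1.le (by positivity)
    have hsub : {z : Fin n → ℝ | Q z ≤ (t * (Real.sqrt (1 - c^2) / c)) ^ 2} ⊆
        {z | (t, z) ∈ {p : ℝ × (Fin n → ℝ) | 0 ≤ p.1 ∧ p.1 ≤ c ∧
          c^2 * Q p.2 ≤ p.1^2 * (1 - c^2)}} := by
      intro z hz
      simp only [mem_setOf_eq] at hz ⊢
      rw [mul_pow, div_pow, hs2] at hz
      refine ⟨ht.1.le, ht.2, ?_⟩
      rw [div_eq_mul_inv] at hz
      have hc2 : (0:ℝ) < c^2 := by positivity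
      calc c^2 * Q z ≤ c^2 * (t^2 * ((1-c^2) * (c^2)⁻¹)) :=
            mul_le_mul_of_nonneg_left hz hc2.le
        _ = t^2 * (1-c^2) := by field_simp
    calc ENNReal.ofReal (g t) * Bn n
        = volume {z : Fin n → ℝ | Q z ≤ (t * (Real.sqrt (1 - c^2) / c)) ^ 2} := by
          rw [vol_Qball hn hr0]
      _ ≤ _ := measure_mono hsub
  refine le_trans ?_ step1
  rw [lintegral_mul_const _ (show Measurable fun t => ENNReal.ofReal (g t) from
    ENNReal.measurable_ofReal.comp hgc.measurable)]
  have hint : IntegrableOn g (Ioc 0 c) volume :=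
    (hgc.integrableOn_Icc).mono_set Ioc_subset_Icc_self
  rw [← ofReal_integral_eq_lintegral_ofReal hint]
  swap
  · filter_upwards [self_mem_ae_restrict measurableSet_Ioc] with t ht
    have h1 : (0:ℝ) ≤ t := ht.1.le
    have := Real.sqrt_nonneg (1 - c^2)
    positivity
  apply mul_le_mul_left
  apply ENNReal.ofReal_le_ofReal
  rw [← intervalIntegral.integral_of_le hc0.le]
  have hJ : ∫ t in (0:ℝ)..c, g t = (Real.sqrt (1-c^2)/c) ^ n * (c^(n+1) / (n+1)) := by
    simp only [hg, mul_pow]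
    rw [intervalIntegral.integral_mul_const, integral_pow]
    ring_nf
  rw [hJ, div_pow, sqrt_pow_rpow (by nlinarith : (0:ℝ) ≤ 1 - c^2)]
  apply le_of_eq
  rw [pow_succ]
  field_simp
  ring

lemma vol_ball_le (hn : 1 ≤ n) :
    volume {p : ℝ × (Fin n → ℝ) | p.1 ^ 2 + Q p.2 ≤ 1} ≤ ENNReal.ofReal (π/2) * Bn n := by
  have hmeas : MeasurableSet {p : ℝ × (Fin n → ℝ) | p.1 ^ 2 + Q p.2 ≤ 1} :=
    measurableSet_le ((measurable_fst.pow_const 2).add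
      (contQ.measurable.comp measurable_snd)) measurable_const
  rw [vol_slice hmeas]
  have hbd : ∀ t : ℝ, volume {z : Fin n → ℝ | (t, z) ∈ {p : ℝ × (Fin n → ℝ) | p.1 ^ 2 + Q p.2 ≤ 1}}
      ≤ (Icc (-1:ℝ) 1).indicator (fun t => ENNReal.ofReal (Real.sqrt (1 - t^2))) t * Bn n := by
    intro t
    by_cases ht : t ∈ Icc (-1:ℝ) 1
    · have h1 : (0:ℝ) ≤ 1 - t^2 := by rcases ht with ⟨h,h'⟩; nlinarith
      have hset : {z : Fin n → ℝ | (t, z) ∈ {p : ℝ × (Fin n → ℝ) | p.1 ^ 2 + Q p.2 ≤ 1}} =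
          {z : Fin n → ℝ | Q z ≤ Real.sqrt (1 - t^2) ^ 2} := by
        ext z; simp only [mem_setOf_eq, Real.sq_sqrt h1]; constructor <;> intro h <;> linarith
      rw [hset, vol_Qball hn (Real.sqrt_nonneg _), indicator_of_mem ht]
      apply mul_le_mul_left
      apply ENNReal.ofReal_le_ofReal
      calc Real.sqrt (1-t^2) ^ n ≤ Real.sqrt (1-t^2) ^ 1 :=
            pow_le_pow_of_le_one (Real.sqrt_nonneg _)
              ((Real.sqrt_le_sqrt_iff (by norm_num)).mpr (by nlinarith) |>.trans_eq Real.sqrt_one) hn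
        _ = _ := pow_one _
    · have hset : {z : Fin n → ℝ | (t, z) ∈ {p : ℝ × (Fin n → ℝ) | p.1 ^ 2 + Q p.2 ≤ 1}} = ∅ := by
        ext z
        simp only [mem_setOf_eq, mem_empty_iff_false, iff_false]
        intro h
        simp only [mem_Icc, not_and_or, not_le] at ht
        have := Q_nonneg z
        rcases ht with ht | ht <;> nlinarith
      rw [hset, indicator_of_notMem ht]
      simp
  calc (∫⁻ t : ℝ, volume {z : Fin n → ℝ | (t, z) ∈ {p : ℝ × (Fin n → ℝ) | p.1 ^ 2 + Q p.2 ≤ 1}})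
      ≤ ∫⁻ t : ℝ, (Icc (-1:ℝ) 1).indicator (fun t => ENNReal.ofReal (Real.sqrt (1 - t^2))) t * Bn n :=
        lintegral_mono hbd
    _ = (∫⁻ t in Icc (-1:ℝ) 1, ENNReal.ofReal (Real.sqrt (1 - t^2))) * Bn n := by
        rw [lintegral_mul_const _ (show Measurable fun t : ℝ =>
            (Icc (-1:ℝ) 1).indicator (fun t => ENNReal.ofReal (Real.sqrt (1 - t^2))) t from
          Measurable.indicator (show Measurable fun t : ℝ => ENNReal.ofReal (Real.sqrt (1-t^2))
            by fun_prop) measurableSet_Icc),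
          lintegral_indicator measurableSet_Icc]
    _ ≤ ENNReal.ofReal (π/2) * Bn n := by
        apply mul_le_mul_left
        have hint : IntegrableOn (fun t : ℝ => Real.sqrt (1 - t^2)) (Icc (-1:ℝ) 1) volume :=
          Continuous.integrableOn_Icc (by fun_prop)
        rw [← ofReal_integral_eq_lintegral_ofReal hint
          (Filter.Eventually.of_forall fun t => Real.sqrt_nonneg _)]
        apply ENNReal.ofReal_le_ofReal
        rw [MeasureTheory.integral_Icc_eq_integral_Ioc,
          ← intervalIntegral.integral_of_le (by norm_num : (-1:ℝ) ≤ 1)]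
        rw [integral_sqrt_one_sub_sq]

lemma sector_vol (hn : 1 ≤ n) {c : ℝ} (hc0 : 0 ≤ c) (hc1 : c < 1) :
    ENNReal.ofReal ((1 - c^2) ^ ((n:ℝ)/2) * (c / (n+1) + (1-c) * (2/(n+2)))) * Bn n ≤
      volume {p : ℝ × (Fin n → ℝ) | p.1 ^ 2 + Q p.2 ≤ 1 ∧
        c * Real.sqrt (p.1 ^ 2 + Q p.2) ≤ p.1} := by
  set K1 : Set (ℝ × (Fin n → ℝ)) := {p | 0 ≤ p.1 ∧ p.1 ≤ c ∧
      c^2 * Q p.2 ≤ p.1^2 * (1 - c^2)} with hK1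
  set K2 : Set (ℝ × (Fin n → ℝ)) := {p | c < p.1 ∧ p.1 ^ 2 + Q p.2 ≤ 1} with hK2
  set S : Set (ℝ × (Fin n → ℝ)) := {p | p.1 ^ 2 + Q p.2 ≤ 1 ∧
      c * Real.sqrt (p.1 ^ 2 + Q p.2) ≤ p.1} with hS
  have hK2S : K2 ⊆ S := by
    rintro ⟨t, z⟩ ⟨h1, h2⟩
    have hQ := Q_nonneg z
    refine ⟨h2, ?_⟩
    have hsq1 : Real.sqrt (t^2 + Q z) ≤ 1 :=
      ((Real.sqrt_le_sqrt_iff (by norm_num)).mpr h2).trans_eq Real.sqrt_one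
    calc c * Real.sqrt (t^2 + Q z) ≤ c * 1 :=
          mul_le_mul_of_nonneg_left hsq1 hc0
      _ = c := mul_one c
      _ ≤ t := h1.le
  rcases hc0.eq_or_lt with rfl | hcpos
  · calc ENNReal.ofReal ((1 - (0:ℝ)^2) ^ ((n:ℝ)/2) * (0 / (n+1) + (1-0) * (2/(n+2)))) * Bn n
        = ENNReal.ofReal ((1 - (0:ℝ)^2) ^ ((n:ℝ)/2) * ((1-0) * (2/(n+2)))) * Bn n := by
          norm_num
      _ ≤ volume K2 := vol_K2 hn le_rfl hc1
      _ ≤ volume S := measure_mono hK2S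
  · have hK1S : K1 ⊆ S := by
      rintro ⟨t, z⟩ ⟨h1, h2, h3⟩
      have hQ := Q_nonneg z
      have ht2 : t^2 ≤ c^2 := by nlinarith [mul_le_mul h2 h2 h1 hc0]
      have hkey : c^2 * (t^2 + Q z) ≤ c^2 * 1 := by nlinarith [ht2, h3]
      have hb : t^2 + Q z ≤ 1 := le_of_mul_le_mul_left hkey (by positivity)
      refine ⟨hb, ?_⟩
      have hcs : c^2 * (t^2 + Q z) ≤ t^2 := by nlinarith
      calc c * Real.sqrt (t^2 + Q z) = Real.sqrt (c^2 * (t^2 + Q z)) := by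
            rw [Real.sqrt_mul (sq_nonneg c), Real.sqrt_sq hc0]
        _ ≤ Real.sqrt (t^2) := Real.sqrt_le_sqrt hcs
        _ = t := Real.sqrt_sq h1
    have hK2meas : MeasurableSet K2 :=
      (measurableSet_lt measurable_const measurable_fst).inter
        (measurableSet_le ((measurable_fst.pow_const 2).add
          (contQ.measurable.comp measurable_snd)) measurable_const)
    have hdisj : Disjoint K1 K2 := by
      rw [Set.disjoint_left]
      rintro ⟨t, z⟩ h1 h2
      exact absurd h1.2.1 (not_le.mpr h2.1)
    have hA : (0:ℝ) ≤ (1 - c^2) ^ ((n:ℝ)/2) := Real.rpow_nonneg (by nlinarith) _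
    calc ENNReal.ofReal ((1 - c^2) ^ ((n:ℝ)/2) * (c / (n+1) + (1-c) * (2/(n+2)))) * Bn n
        = ENNReal.ofReal ((1 - c^2) ^ ((n:ℝ)/2) * (c / (n+1))) * Bn n +
          ENNReal.ofReal ((1 - c^2) ^ ((n:ℝ)/2) * ((1-c) * (2/(n+2)))) * Bn n := by
          rw [mul_add, ENNReal.ofReal_add (mul_nonneg hA (div_nonneg hc0 (by positivity)))
            (mul_nonneg hA (mul_nonneg (by linarith) (by positivity))), add_mul]
      _ ≤ volume K1 + volume K2 := add_le_add (vol_K1 hn hcpos hc1) (vol_K2 hn hc0 hc1)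
      _ = volume (K1 ∪ K2) := (measure_union hdisj hK2meas).symm
      _ ≤ volume S := measure_mono (union_subset hK1S hK2S)


section Espace

variable {d : ℕ}

lemma exists_iso (x y : EuclideanSpace ℝ (Fin d)) (h : ‖x‖ = ‖y‖) :
    ∃ T : EuclideanSpace ℝ (Fin d) ≃ₗᵢ[ℝ] EuclideanSpace ℝ (Fin d), T x = y :=
  ⟨Submodule.reflection (ℝ ∙ (x - y))ᗮ, Submodule.reflection_sub h⟩

lemma sector_meas (c : ℝ) (v : EuclideanSpace ℝ (Fin d)) :
    MeasurableSet {x : EuclideanSpace ℝ (Fin d) | ‖x‖ ≤ 1 ∧ c * ‖x‖ ≤ inner ℝ x v} := by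
  refine IsClosed.measurableSet ?_
  exact (isClosed_le continuous_norm continuous_const).inter
    (isClosed_le (continuous_const.mul continuous_norm)
      (Continuous.inner continuous_id continuous_const))

end Espace

end
end S17

open S17 in
set_option maxHeartbeats 2000000 in
/-- If b is drawn uniformly from the unit sphere in ℝ^d (d ≥ 2) — i.e. from
a rotation-invariant probability measure supported on the unit sphere — and
a is a fixed unit vector, then for δ ∈ (0, 2],
P[‖a − b‖ ≤ δ] ≥ (1/(π(d−1))) (δ√(1 − δ²/4))^{d−1}. -/
theorem stmt_17 (d : ℕ) (hd : 2 ≤ d)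
    (μ : Measure (EuclideanSpace ℝ (Fin d))) [IsProbabilityMeasure μ]
    (hsphere : μ {w | ‖w‖ = 1} = 1)
    (hsymm : ∀ T : EuclideanSpace ℝ (Fin d) ≃ₗᵢ[ℝ] EuclideanSpace ℝ (Fin d),
      Measure.map T μ = μ)
    (a : EuclideanSpace ℝ (Fin d)) (ha : ‖a‖ = 1)
    (δ : ℝ) (hδ : δ ∈ Set.Ioc 0 2) :
    μ {b | ‖a - b‖ ≤ δ} ≥
      ENNReal.ofReal ((1 / (Real.pi * (d - 1))) *
        (δ * Real.sqrt (1 - δ ^ 2 / 4)) ^ (d - 1)) := by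
  obtain ⟨hδ0, hδ2⟩ := hδ
  obtain ⟨m, rfl⟩ : ∃ m, d = m + 1 := ⟨d - 1, by omega⟩
  have hm : 1 ≤ m := by omega
  simp only [Nat.add_sub_cancel]
  have hcast : ((m:ℝ) + 1) - 1 = (m:ℝ) := by ring
  set c : ℝ := max (1 - δ^2/2) 0 with hcdef
  have hc0 : 0 ≤ c := le_max_right _ _
  have hc1 : c < 1 := max_lt (by nlinarith) one_pos
  set u : EuclideanSpace ℝ (Fin (m+1)) := EuclideanSpace.single 0 1 with hudef
  have hnu : ‖u‖ = 1 := by simp [hudef]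
  set S : Set (EuclideanSpace ℝ (Fin (m+1)) × EuclideanSpace ℝ (Fin (m+1))) :=
    {p | ‖p.1‖ ≤ 1 ∧ c * ‖p.1‖ ≤ inner ℝ p.1 p.2} with hSdef
  have hSmeas : MeasurableSet S := by
    refine IsClosed.measurableSet ?_
    exact (isClosed_le continuous_fst.norm continuous_const).inter
      (isClosed_le (continuous_const.mul continuous_fst.norm) continuous_inner)
  set Cap : Set (EuclideanSpace ℝ (Fin (m+1))) := {b | c ≤ inner ℝ a b} with hCapdef
  have hCapMeas : MeasurableSet Cap :=
    (isClosed_le continuous_const (Continuous.inner continuous_const continuous_id)).measurableSet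
  set W : ℝ≥0∞ := volume {x : EuclideanSpace ℝ (Fin (m+1)) | ‖x‖ ≤ 1 ∧ c * ‖x‖ ≤ inner ℝ x u}
    with hWdef
  set V : ℝ≥0∞ := volume {x : EuclideanSpace ℝ (Fin (m+1)) | ‖x‖ ≤ 1} with hVdef
  have hballmeas : MeasurableSet {x : EuclideanSpace ℝ (Fin (m+1)) | ‖x‖ ≤ 1} :=
    (isClosed_le continuous_norm continuous_const).measurableSet
  have hsphmeas : MeasurableSet {w : EuclideanSpace ℝ (Fin (m+1)) | ‖w‖ = 1} :=
    (isClosed_eq continuous_norm continuous_const).measurableSet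
  have hcompl : μ {w : EuclideanSpace ℝ (Fin (m+1)) | ‖w‖ = 1}ᶜ = 0 := by
    rw [measure_compl hsphmeas (measure_ne_top μ _), hsphere, measure_univ, tsub_self]
  -- Fubini side 1
  have side1 : (volume.prod μ) S = μ Cap * V := by
    rw [Measure.prod_apply hSmeas]
    have hae : ∀ᵐ x : EuclideanSpace ℝ (Fin (m+1)), μ (Prod.mk x ⁻¹' S) =
        ({y : EuclideanSpace ℝ (Fin (m+1)) | ‖y‖ ≤ 1}.indicator (fun _ => μ Cap)) x := by
      have hzero : volume ({0} : Set (EuclideanSpace ℝ (Fin (m+1)))) = 0 := measure_singleton 0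
      rw [ae_iff]
      refine measure_mono_null ?_ hzero
      intro x hx
      simp only [mem_setOf_eq] at hx
      by_contra hx0
      apply hx
      have hx0 : x ≠ 0 := hx0
      have hnx : (0:ℝ) < ‖x‖ := norm_pos_iff.mpr hx0
      by_cases hxb : ‖x‖ ≤ 1
      · obtain ⟨T, hT⟩ := exists_iso (‖x‖⁻¹ • x) a
          (by rw [norm_smul, ha, norm_inv, norm_norm, inv_mul_cancel₀ hnx.ne'])
        have hpre : Prod.mk x ⁻¹' S = T ⁻¹' Cap := by
          ext b
          simp only [hSdef, hCapdef, mem_preimage, mem_setOf_eq, hxb, true_and]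
          have hinner : (inner ℝ a (T b) : ℝ) = ‖x‖⁻¹ * inner ℝ x b := by
            rw [← hT, LinearIsometryEquiv.inner_map_map, real_inner_smul_left]
          rw [hinner, le_inv_mul_iff₀ hnx, mul_comm ‖x‖ c]
        rw [hpre, show ({y : EuclideanSpace ℝ (Fin (m+1)) | ‖y‖ ≤ 1}.indicator
          (fun _ => μ Cap)) x = μ Cap from Set.indicator_of_mem
          (show x ∈ {y : EuclideanSpace ℝ (Fin (m+1)) | ‖y‖ ≤ 1} from hxb) _]
        conv_rhs => rw [← hsymm T]
        rw [Measure.map_apply T.continuous.measurable hCapMeas]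
      · have hpre : Prod.mk x ⁻¹' S = ∅ := by
          ext b
          simp only [hSdef, mem_preimage, mem_setOf_eq, mem_empty_iff_false, iff_false,
            not_and]
          intro h
          exact absurd h hxb
        rw [hpre, show ({y : EuclideanSpace ℝ (Fin (m+1)) | ‖y‖ ≤ 1}.indicator
          (fun _ => μ Cap)) x = 0 from Set.indicator_of_notMem
          (show x ∉ {y : EuclideanSpace ℝ (Fin (m+1)) | ‖y‖ ≤ 1} from hxb) _]
        simp
    rw [lintegral_congr_ae hae, lintegral_indicator hballmeas, setLIntegral_const]
  -- Fubini side 2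
  have side2 : (volume.prod μ) S = W := by
    rw [Measure.prod_apply_symm hSmeas]
    have hae : ∀ᵐ b ∂μ, volume ((fun x => (x, b)) ⁻¹' S) = W := by
      rw [ae_iff]
      refine measure_mono_null ?_ hcompl
      intro b hb
      simp only [mem_setOf_eq, mem_compl_iff] at hb ⊢
      intro hnb
      apply hb
      obtain ⟨T, hT⟩ := exists_iso b u (by rw [hnb, hnu])
      have hpre : (fun x => (x, b)) ⁻¹' S =
          T ⁻¹' {x : EuclideanSpace ℝ (Fin (m+1)) | ‖x‖ ≤ 1 ∧ c * ‖x‖ ≤ inner ℝ x u} := by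
        ext x
        simp only [hSdef, mem_preimage, mem_setOf_eq, LinearIsometryEquiv.norm_map]
        rw [← hT, LinearIsometryEquiv.inner_map_map]
      rw [hpre, (T.measurePreserving).measure_preimage (sector_meas c u).nullMeasurableSet]
    rw [lintegral_congr_ae hae, lintegral_const, measure_univ, mul_one]
  have hWV : μ Cap * V = W := by rw [← side1, side2]
  -- transfer to coordinates
  have hMP : MeasurePreserving ((MeasurableEquiv.piFinSuccAbove (fun _ : Fin (m+1) => ℝ) 0) ∘
      (MeasurableEquiv.toLp 2 (Fin (m+1) → ℝ)).symm) volume volume :=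
    (volume_preserving_piFinSuccAbove (fun _ : Fin (m+1) => ℝ) 0).comp
      (EuclideanSpace.volume_preserving_symm_measurableEquiv_toLp (Fin (m+1)))
  have happ : ∀ x : EuclideanSpace ℝ (Fin (m+1)),
      ((MeasurableEquiv.piFinSuccAbove (fun _ : Fin (m+1) => ℝ) 0) ∘
        (MeasurableEquiv.toLp 2 (Fin (m+1) → ℝ)).symm) x =
        (x 0, fun j => x (Fin.succAbove 0 j)) := fun x => rfl
  have hsum : ∀ x : EuclideanSpace ℝ (Fin (m+1)),
      (x 0)^2 + Q (fun j => x (Fin.succAbove 0 j)) = ‖x‖^2 := by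
    intro x
    rw [EuclideanSpace.norm_eq, Real.sq_sqrt (Finset.sum_nonneg fun i _ => sq_nonneg _)]
    unfold Q
    rw [Fin.sum_univ_succAbove (fun i => ‖x i‖^2) 0]
    simp [Real.norm_eq_abs, sq_abs]
  have hsum_nn : ∀ x : EuclideanSpace ℝ (Fin (m+1)),
      (0:ℝ) ≤ (x 0)^2 + Q (fun j => x (Fin.succAbove 0 j)) :=
    fun x => add_nonneg (sq_nonneg _) (Q_nonneg _)
  have hcont2 : Continuous fun p : ℝ × (Fin m → ℝ) => p.1^2 + Q p.2 :=
    (continuous_fst.pow 2).add (contQ.comp continuous_snd)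
  have hPSmeas : MeasurableSet {p : ℝ × (Fin m → ℝ) | p.1^2 + Q p.2 ≤ 1 ∧
      c * Real.sqrt (p.1^2 + Q p.2) ≤ p.1} :=
    ((isClosed_le hcont2 continuous_const).inter (isClosed_le
      (continuous_const.mul (Real.continuous_sqrt.comp hcont2)) continuous_fst)).measurableSet
  have hPBmeas : MeasurableSet {p : ℝ × (Fin m → ℝ) | p.1^2 + Q p.2 ≤ 1} :=
    (isClosed_le hcont2 continuous_const).measurableSet
  have hinneru : ∀ x : EuclideanSpace ℝ (Fin (m+1)), (inner ℝ x u : ℝ) = x 0 := by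
    intro x
    rw [hudef, EuclideanSpace.inner_single_right]
    simp
  have hnorm_le : ∀ x : EuclideanSpace ℝ (Fin (m+1)), ‖x‖ ≤ 1 ↔ ‖x‖^2 ≤ 1 := by
    intro x
    constructor
    · intro h; nlinarith [norm_nonneg x]
    · intro h; nlinarith [norm_nonneg x]
  have hWset : W = volume {p : ℝ × (Fin m → ℝ) | p.1^2 + Q p.2 ≤ 1 ∧
      c * Real.sqrt (p.1^2 + Q p.2) ≤ p.1} := by
    rw [hWdef, ← hMP.measure_preimage hPSmeas.nullMeasurableSet]
    congr 1
    ext x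
    rw [mem_preimage, happ x]
    simp only [mem_setOf_eq]
    rw [hsum x, hinneru x, ← hnorm_le x, Real.sqrt_sq (norm_nonneg x)]
  have hVset : V = volume {p : ℝ × (Fin m → ℝ) | p.1^2 + Q p.2 ≤ 1} := by
    rw [hVdef, ← hMP.measure_preimage hPBmeas.nullMeasurableSet]
    congr 1
    ext x
    rw [mem_preimage, happ x]
    simp only [mem_setOf_eq]
    rw [hsum x, ← hnorm_le x]
  -- bounds
  have hsec := sector_vol hm hc0 hc1
  have hball := vol_ball_le (n := m) hm
  rw [← hVset] at hball
  rw [← hWset] at hsec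
  -- V nonzero and finite
  have hV0 : V ≠ 0 := by
    rw [hVdef]
    intro h
    have hsub : Metric.ball (0 : EuclideanSpace ℝ (Fin (m+1))) 1 ⊆
        {x : EuclideanSpace ℝ (Fin (m+1)) | ‖x‖ ≤ 1} := by
      intro x hx
      rw [Metric.mem_ball, dist_zero_right] at hx
      exact hx.le
    exact absurd (measure_mono_null hsub h)
      (Metric.measure_ball_pos volume (0 : EuclideanSpace ℝ (Fin (m+1))) one_pos).ne'
  have hVtop : V ≠ ⊤ := by
    rw [hVdef, show {x : EuclideanSpace ℝ (Fin (m+1)) | ‖x‖ ≤ 1} =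
      Metric.closedBall 0 1 by ext x; simp [Metric.mem_closedBall, dist_zero_right]]
    exact (measure_closedBall_lt_top).ne
  -- numeric part
  set s : ℝ := δ * Real.sqrt (1 - δ^2/4) with hsdef
  have h4 : (0:ℝ) ≤ 1 - δ^2/4 := by nlinarith
  have hs0 : 0 ≤ s := mul_nonneg hδ0.le (Real.sqrt_nonneg _)
  have hs2 : s^2 ≤ 1 - c^2 := by
    rw [hsdef, mul_pow, Real.sq_sqrt h4]
    rcases le_or_gt 0 (1 - δ^2/2) with h | h
    · rw [hcdef, max_eq_left h]; nlinarith
    · rw [hcdef, max_eq_right h.le]; nlinarith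
  have hpow : s^m ≤ (1 - c^2) ^ ((m:ℝ)/2) := by
    rw [show s^m = (s^2) ^ ((m:ℝ)/2) by
      rw [← sqrt_pow_rpow (sq_nonneg s) m, Real.sqrt_sq hs0]]
    exact Real.rpow_le_rpow (sq_nonneg s) hs2 (by positivity)
  have hcoef : 1/(2*(m:ℝ)) ≤ c/((m:ℝ)+1) + (1-c) * (2/((m:ℝ)+2)) := by
    have hm1 : (1:ℝ) ≤ (m:ℝ) := by exact_mod_cast hm
    have h1 : 1/(2*(m:ℝ)) ≤ 1/((m:ℝ)+1) := by
      apply one_div_le_one_div_of_le (by linarith) (by linarith)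
    have h2 : 1/(2*(m:ℝ)) ≤ 2/((m:ℝ)+2) := by
      rw [div_le_div_iff₀ (by linarith) (by linarith)]
      nlinarith
    calc 1/(2*(m:ℝ)) = c * (1/(2*(m:ℝ))) + (1-c) * (1/(2*(m:ℝ))) := by ring
      _ ≤ c * (1/((m:ℝ)+1)) + (1-c) * (2/((m:ℝ)+2)) :=
          add_le_add (mul_le_mul_of_nonneg_left h1 hc0)
            (mul_le_mul_of_nonneg_left h2 (by linarith))
      _ = c/((m:ℝ)+1) + (1-c) * (2/((m:ℝ)+2)) := by ring
  have hX : (1 / (Real.pi * (m:ℝ))) * s^m * (Real.pi/2) ≤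
      (1 - c^2) ^ ((m:ℝ)/2) * (c/((m:ℝ)+1) + (1-c) * (2/((m:ℝ)+2))) := by
    have hm1 : (1:ℝ) ≤ (m:ℝ) := by exact_mod_cast hm
    have hpi := Real.pi_pos
    have : (1 / (Real.pi * (m:ℝ))) * s^m * (Real.pi/2) = s^m * (1/(2*(m:ℝ))) := by
      field_simp
    rw [this]
    exact mul_le_mul hpow hcoef (by positivity) (Real.rpow_nonneg (by nlinarith) _)
  have hR0 : (0:ℝ) ≤ (1 / (Real.pi * (m:ℝ))) * s^m := by positivity
  -- final chain
  have hchain : ENNReal.ofReal ((1 / (Real.pi * (m:ℝ))) * s^m) * V ≤ μ Cap * V := by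
    calc ENNReal.ofReal ((1 / (Real.pi * (m:ℝ))) * s^m) * V
        ≤ ENNReal.ofReal ((1 / (Real.pi * (m:ℝ))) * s^m) * (ENNReal.ofReal (π/2) * Bn m) :=
          mul_le_mul_right hball _
      _ = ENNReal.ofReal ((1 / (Real.pi * (m:ℝ))) * s^m * (π/2)) * Bn m := by
          rw [← mul_assoc, ← ENNReal.ofReal_mul hR0]
      _ ≤ ENNReal.ofReal ((1 - c^2) ^ ((m:ℝ)/2) * (c/((m:ℝ)+1) + (1-c) * (2/((m:ℝ)+2)))) *
          Bn m := mul_le_mul_left (ENNReal.ofReal_le_ofReal hX) _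
      _ ≤ W := hsec
      _ = μ Cap * V := hWV.symm
  have hCapBound : ENNReal.ofReal ((1 / (Real.pi * (m:ℝ))) * s^m) ≤ μ Cap :=
    (ENNReal.mul_le_mul_iff_left hV0 hVtop).mp hchain
  -- cap vs target set
  have hfinal : μ Cap ≤ μ {b : EuclideanSpace ℝ (Fin (m+1)) | ‖a - b‖ ≤ δ} := by
    have hsplit := measure_inter_add_diff Cap hsphmeas (μ := μ)
    have hdiff : μ (Cap \ {w : EuclideanSpace ℝ (Fin (m+1)) | ‖w‖ = 1}) = 0 :=
      measure_mono_null (diff_subset_compl _ _) hcompl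
    have hsub : Cap ∩ {w : EuclideanSpace ℝ (Fin (m+1)) | ‖w‖ = 1} ⊆
        {b : EuclideanSpace ℝ (Fin (m+1)) | ‖a - b‖ ≤ δ} := by
      rintro b ⟨hb1, hb2⟩
      simp only [hCapdef, mem_setOf_eq] at hb1 hb2 ⊢
      have hsq : ‖a - b‖^2 ≤ δ^2 := by
        rw [norm_sub_sq_real, ha, hb2]
        have : 1 - δ^2/2 ≤ c := le_max_left _ _
        nlinarith
      have := Real.sqrt_le_sqrt hsq
      rwa [Real.sqrt_sq (norm_nonneg _), Real.sqrt_sq hδ0.le] at this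
    calc μ Cap = μ (Cap ∩ {w : EuclideanSpace ℝ (Fin (m+1)) | ‖w‖ = 1}) +
          μ (Cap \ {w : EuclideanSpace ℝ (Fin (m+1)) | ‖w‖ = 1}) := hsplit.symm
      _ = μ (Cap ∩ {w : EuclideanSpace ℝ (Fin (m+1)) | ‖w‖ = 1}) := by rw [hdiff, add_zero]
      _ ≤ _ := measure_mono hsub
  refine le_trans ?_ hfinal
  refine le_trans (le_of_eq ?_) hCapBound
  congr 1
  rw [hsdef]
  push_cast
  ring
end
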